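/- In the quality linkage model with N agents and action profile a, assume that for each agent i the partial derivative ∂/∂s_i E[θ̄ | S = s] exists for every s; then ∂/∂s_i E[θ̄ | S = s] > 0 for every agent i and every s ∈ ℝ^N. In the circumstance linkage model, assume ∂/∂s_i E[ε̄ | S = s] exists for every s; then ∂/∂s_i E[ε̄ | S = s] > 0 for every agent i and every s ∈ ℝ^N. -/

import Mathlib

open MeasureTheory Real Filter

/-- Convolution of two densities on ℝ. -/
noncomputable def conv (f g : ℝ → ℝ) (x : ℝ) : ℝ := ∫ t, f t * g (x - t)

/-- A probability density on ℝ that is strictly positive, `C¹` with bounded derivative,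
and strictly log-concave. -/
def NiceDensity (f : ℝ → ℝ) : Prop :=
  (∀ x, 0 < f x) ∧ (∫ x, f x = 1) ∧ ContDiff ℝ 1 f ∧
    (∃ M, ∀ x, |deriv f x| ≤ M) ∧
    StrictConcaveOn ℝ Set.univ (fun x => Real.log (f x))

/-- Quality linkage model: joint weight of `(θ̄, θ⊥ᵢ)` together with the likelihood of the
outcome profile `s` at action profile `a` (outcomes `Sⱼ = θ̄ + θ⊥ⱼ + aⱼ + εⱼ`). -/
noncomputable def qWeight (fb fp fe : ℝ → ℝ) {N : ℕ} (a : Fin N → ℝ) (i : Fin N)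
    (s : Fin N → ℝ) (b t : ℝ) : ℝ :=
  fb b * fp t * fe (s i - a i - b - t) *
    ∏ j ∈ Finset.univ.erase i, conv fp fe (s j - a j - b)

/-- Quality linkage model: Bayes-rule posterior mean `E[θᵢ | S = s]` of agent `i`'s type
`θᵢ = θ̄ + θ⊥ᵢ`, conjectured action profile `a`. -/
noncomputable def qPostMean (fb fp fe : ℝ → ℝ) {N : ℕ} (a : Fin N → ℝ) (i : Fin N)
    (s : Fin N → ℝ) : ℝ :=
  (∫ b, ∫ t, (b + t) * qWeight fb fp fe a i s b t) /
    (∫ b, ∫ t, qWeight fb fp fe a i s b t)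

/-- Circumstance linkage model: joint weight of `(ε̄, θᵢ)` together with the likelihood of
the outcome profile `s` at action profile `a` (outcomes `Sⱼ = θⱼ + aⱼ + ε̄ + ε⊥ⱼ`). -/
noncomputable def cWeight (ft fb fp : ℝ → ℝ) {N : ℕ} (a : Fin N → ℝ) (i : Fin N)
    (s : Fin N → ℝ) (e t : ℝ) : ℝ :=
  fb e * ft t * fp (s i - a i - t - e) *
    ∏ j ∈ Finset.univ.erase i, conv ft fp (s j - a j - e)

/-- Circumstance linkage model: Bayes-rule posterior mean `E[θᵢ | S = s]`. -/
noncomputable def cPostMean (ft fb fp : ℝ → ℝ) {N : ℕ} (a : Fin N → ℝ) (i : Fin N)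
    (s : Fin N → ℝ) : ℝ :=
  (∫ e, ∫ t, t * cWeight ft fb fp a i s e t) /
    (∫ e, ∫ t, cWeight ft fb fp a i s e t)

/-- Quality linkage model: density of the outcome profile `S` at action profile `a`. -/
noncomputable def qDensity (fb fp fe : ℝ → ℝ) {N : ℕ} (a : Fin N → ℝ)
    (s : Fin N → ℝ) : ℝ :=
  ∫ b, fb b * ∏ j, conv fp fe (s j - a j - b)

/-- Circumstance linkage model: density of the outcome profile `S` at action profile `a`. -/
noncomputable def cDensity (ft fb fp : ℝ → ℝ) {N : ℕ} (a : Fin N → ℝ)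
    (s : Fin N → ℝ) : ℝ :=
  ∫ e, fb e * ∏ j, conv ft fp (s j - a j - e)

/-- Quality linkage model: agent `i1`'s expected value of the principal's posterior-mean
forecast of his type when the principal conjectures actions `α` and agent `i1` actually
deviates by `Δ`. -/
noncomputable def qVal (fb fp fe : ℝ → ℝ) {N : ℕ} (i1 : Fin N) (α : Fin N → ℝ)
    (Δ : ℝ) : ℝ :=
  ∫ s : Fin N → ℝ,
    qPostMean fb fp fe α i1 (Function.update s i1 (s i1 + Δ)) * qDensity fb fp fe α s

/-- Circumstance linkage model: agent `i1`'s expected value of the principal's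
posterior-mean forecast of his type when the principal conjectures actions `α` and agent
`i1` actually deviates by `Δ`. -/
noncomputable def cVal (ft fb fp : ℝ → ℝ) {N : ℕ} (i1 : Fin N) (α : Fin N → ℝ)
    (Δ : ℝ) : ℝ :=
  ∫ s : Fin N → ℝ,
    cPostMean ft fb fp α i1 (Function.update s i1 (s i1 + Δ)) * cDensity ft fb fp α s

/-- Marginal value of effort in the quality linkage model with population size `N + 1`
(agent 1 is coordinate `0`; the value of distortion does not depend on the conjectured
action profile, so the zero profile is used). -/
noncomputable def MVQ (fb fp fe : ℝ → ℝ) (N : ℕ) : ℝ :=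
  deriv (fun Δ => qVal fb fp fe (0 : Fin (N + 1)) (fun _ => 0) Δ) 0

/-- Marginal value of effort in the circumstance linkage model with population size
`N + 1`. -/
noncomputable def MVC (ft fb fp : ℝ → ℝ) (N : ℕ) : ℝ :=
  deriv (fun Δ => cVal ft fb fp (0 : Fin (N + 1)) (fun _ => 0) Δ) 0

/-- Upper Dini derivative `D⁺f(x) = limsup_{h ↓ 0} (f (x + h) − f x) / h`. -/
noncomputable def diniUpper (f : ℝ → ℝ) (x : ℝ) : ℝ :=
  Filter.limsup (fun h => (f (x + h) - f x) / h) (nhdsWithin 0 (Set.Ioi 0))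

/-- Quality linkage model: Bayes-rule posterior mean `E[θ̄ | S = s]` of the common type
component. -/
noncomputable def qBarMean (fb fp fe : ℝ → ℝ) {N : ℕ} (a : Fin N → ℝ)
    (s : Fin N → ℝ) : ℝ :=
  (∫ b, b * (fb b * ∏ j, conv fp fe (s j - a j - b))) /
    (∫ b, fb b * ∏ j, conv fp fe (s j - a j - b))

/-- Circumstance linkage model: Bayes-rule posterior mean `E[ε̄ | S = s]` of the common
noise component. -/
noncomputable def cBarMean (ft fb fp : ℝ → ℝ) {N : ℕ} (a : Fin N → ℝ)
    (s : Fin N → ℝ) : ℝ :=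
  (∫ e, e * (fb e * ∏ j, conv ft fp (s j - a j - e))) /
    (∫ e, fb e * ∏ j, conv ft fp (s j - a j - e))


open scoped ENNReal NNReal Topology

namespace CCMI

variable {f : ℝ → ℝ}

lemma nd_int (hf : NiceDensity f) : Integrable f := by
  by_contra h
  have h1 := hf.2.1
  rw [integral_undef h] at h1
  norm_num at h1

lemma nd_cont (hf : NiceDensity f) : Continuous f := hf.2.2.1.continuous

lemma nd_dcont (hf : NiceDensity f) : Continuous (deriv f) :=
  hf.2.2.1.continuous_deriv le_rfl

lemma nd_diff (hf : NiceDensity f) : Differentiable ℝ f :=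
  hf.2.2.1.differentiable one_ne_zero

lemma nd_lip (hf : NiceDensity f) :
    ∃ M : ℝ, 0 < M ∧ (∀ x, |deriv f x| ≤ M) ∧ ∀ x y, |f y - f x| ≤ M * |y - x| := by
  obtain ⟨M0, hM0⟩ := hf.2.2.2.1
  have h0 : 0 ≤ M0 := le_trans (abs_nonneg _) (hM0 0)
  set M : ℝ := M0 + 1 with hM
  have hMpos : 0 < M := by linarith
  have hbd : ∀ x, |deriv f x| ≤ M := fun x => (hM0 x).trans (by linarith)
  have hlipW : LipschitzWith M.toNNReal f := by
    apply lipschitzWith_of_nnnorm_deriv_le (nd_diff hf)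
    intro x
    rw [← NNReal.coe_le_coe, Real.coe_toNNReal _ hMpos.le]
    simpa [Real.norm_eq_abs] using hbd x
  refine ⟨M, hMpos, hbd, fun x y => ?_⟩
  have := hlipW.dist_le_mul y x
  simpa [Real.dist_eq, Real.coe_toNNReal _ hMpos.le] using this

lemma nd_bdd (hf : NiceDensity f) : ∃ C : ℝ, 0 < C ∧ ∀ x, f x ≤ C := by
  obtain ⟨M, hMpos, _, hlip⟩ := nd_lip hf
  refine ⟨max 1 (Real.sqrt (4 * M)), lt_of_lt_of_le one_pos (le_max_left _ _), fun x => ?_⟩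
  set v : ℝ := f x with hv
  have hvpos : 0 < v := hf.1 x
  have hsq : v ^ 2 ≤ 4 * M := by
    set r : ℝ := v / (2 * M) with hr
    have hrpos : 0 < r := by positivity
    have hlow : ∀ t ∈ Set.Icc x (x + r), v / 2 ≤ f t := by
      intro t ht
      have h1 : |f t - f x| ≤ M * |t - x| := hlip x t
      have h2 : |t - x| ≤ r := by
        rw [abs_of_nonneg (by linarith [ht.1])]
        linarith [ht.2]
      have h3 : M * |t - x| ≤ M * r := by nlinarith [abs_nonneg (t - x)]
      have h4 : M * r = v / 2 := by rw [hr]; field_simp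
      have := abs_le.1 (h1.trans (h3.trans_eq h4))
      linarith [this.1]
    have hIcc : (volume (Set.Icc x (x + r))).toReal = r := by
      rw [Real.volume_Icc]
      simp [ENNReal.toReal_ofReal hrpos.le]
    have hge : v / 2 * r ≤ ∫ t in Set.Icc x (x + r), f t := by
      have := setIntegral_ge_of_const_le (c := v / 2) measurableSet_Icc
        (by rw [Real.volume_Icc]; exact ENNReal.ofReal_ne_top) hlow
        ((nd_int hf).integrableOn)
      rwa [measureReal_def, hIcc, smul_eq_mul, mul_comm] at this
    have hle : ∫ t in Set.Icc x (x + r), f t ≤ ∫ t, f t :=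
      setIntegral_le_integral (nd_int hf) (Filter.Eventually.of_forall fun t => (hf.1 t).le)
    rw [hf.2.1] at hle
    have : v / 2 * r ≤ 1 := hge.trans hle
    rw [hr] at this
    rw [div_mul_div_comm] at this
    rw [div_le_one (by positivity)] at this
    nlinarith [this]
  have : v ≤ Real.sqrt (4 * M) := by
    exact (Real.le_sqrt hvpos.le (by linarith)).mpr hsq
  exact this.trans (le_max_right _ _)


lemma tail_right {f : ℝ → ℝ} (hpos : ∀ x, 0 < f x) (hint : Integrable f)
    (hcont : Continuous f) (hconc : ConcaveOn ℝ Set.univ (fun x => Real.log (f x))) :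
    IntegrableOn (fun x => |x| * f x) (Set.Ici (0 : ℝ)) := by
  -- find b1 > 0 with f b1 < f 0
  obtain ⟨b1, hb1pos, hlt⟩ : ∃ b1 : ℝ, 0 < b1 ∧ f b1 < f 0 := by
    by_contra hcon
    push_neg at hcon
    obtain ⟨n, hn⟩ := exists_nat_gt ((∫ x, f x) / f 0)
    have hnpos : 0 < (n : ℝ) := lt_of_le_of_lt (div_nonneg (integral_nonneg fun x => (hpos x).le) (hpos 0).le) hn
    have h1 : f 0 * (n : ℝ) ≤ ∫ x in Set.Ioc 0 (n : ℝ), f x := by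
      have := setIntegral_ge_of_const_le (μ := volume) (s := Set.Ioc (0:ℝ) (n : ℝ)) (c := f 0) measurableSet_Ioc
        (by rw [Real.volume_Ioc]; exact ENNReal.ofReal_ne_top)
        (fun x hx => hcon x hx.1) hint.integrableOn
      rwa [measureReal_def, Real.volume_Ioc, sub_zero, ENNReal.toReal_ofReal hnpos.le, smul_eq_mul, mul_comm] at this
    have h2 : ∫ x in Set.Ioc 0 (n : ℝ), f x ≤ ∫ x, f x :=
      setIntegral_le_integral hint (Filter.Eventually.of_forall fun t => (hpos t).le)
    have h3 : (n : ℝ) * f 0 ≤ ∫ x, f x := by linarith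
    have h4 : (∫ x, f x) < n * f 0 := by
      rw [div_lt_iff₀ (hpos 0)] at hn
      exact hn
    linarith
  set m : ℝ := (Real.log (f b1) - Real.log (f 0)) / b1 with hm
  have hmneg : m < 0 :=
    div_neg_of_neg_of_pos (sub_neg.mpr (Real.log_lt_log (hpos b1) hlt)) hb1pos
  have hub : ∀ b, b1 ≤ b → Real.log (f b) ≤ Real.log (f b1) + m * (b - b1) := by
    intro b hb
    rcases eq_or_lt_of_le hb with rfl | hb'
    · simp
    have hbpos : 0 < b := hb1pos.trans hb'
    have hcomb := hconc.2 (Set.mem_univ (0 : ℝ)) (Set.mem_univ b)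
      (show (0:ℝ) ≤ 1 - b1 / b by rw [sub_nonneg]; exact div_le_one_of_le₀ hb hbpos.le)
      (show (0:ℝ) ≤ b1 / b by positivity)
      (show (1 - b1 / b) + (b1 / b) = 1 by ring)
    have hpt : (1 - b1 / b) • (0 : ℝ) + (b1 / b) • b = b1 := by
      simp only [smul_eq_mul]; field_simp; ring
    rw [hpt] at hcomb
    -- hcomb : (1 - b1/b) * log f 0 + (b1/b) * log f b ≤ log f b1
    set L0 := Real.log (f 0)
    set L1 := Real.log (f b1)
    set Lb := Real.log (f b)
    have hcomb' : (1 - b1 / b) * L0 + (b1 / b) * Lb ≤ L1 := hcomb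
    have hmul := mul_le_mul_of_nonneg_left hcomb' hbpos.le
    have hexp : b * ((1 - b1 / b) * L0 + (b1 / b) * Lb) = (b - b1) * L0 + b1 * Lb := by
      field_simp
    rw [hexp] at hmul
    -- hmul : (b - b1) * L0 + b1 * Lb ≤ b * L1
    rw [hm, div_mul_eq_mul_div, ← sub_le_iff_le_add', le_div_iff₀ hb1pos]
    nlinarith [hmul]
  set A : ℝ := f b1 * Real.exp (-(m * b1)) with hA
  have hApos : 0 < A := mul_pos (hpos b1) (Real.exp_pos _)
  set k : ℝ := -(m / 2) with hk
  have hkpos : 0 < k := by rw [hk]; linarith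
  have hmneg' : 0 < -m := by linarith
  set C : ℝ := A * (2 / (-m)) with hC
  have hbound : ∀ b, b1 < b → |b| * f b ≤ C * Real.exp (-k * b) := by
    intro b hb
    have hbpos : 0 < b := hb1pos.trans hb
    have h1 : f b ≤ A * Real.exp (m * b) := by
      have h2 := hub b hb.le
      rw [show f b = Real.exp (Real.log (f b)) from (Real.exp_log (hpos b)).symm]
      calc Real.exp (Real.log (f b))
          ≤ Real.exp (Real.log (f b1) + m * (b - b1)) := Real.exp_le_exp.mpr h2
        _ = A * Real.exp (m * b) := by
            rw [hA, Real.exp_add, Real.exp_log (hpos b1), mul_assoc, ← Real.exp_add]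
            ring_nf
    have hble : b ≤ Real.exp (k * b) * (2 / (-m)) := by
      have h4 : k * b ≤ Real.exp (k * b) := by
        linarith [Real.add_one_le_exp (k * b)]
      calc b = (k * b) * (1 / k) := by field_simp
        _ ≤ Real.exp (k * b) * (1 / k) := mul_le_mul_of_nonneg_right h4 (by positivity)
        _ = Real.exp (k * b) * (2 / (-m)) := by
            congr 1
            rw [hk]
            field_simp
    calc |b| * f b = b * f b := by rw [abs_of_pos hbpos]
      _ ≤ (Real.exp (k * b) * (2 / (-m))) * (A * Real.exp (m * b)) :=
          mul_le_mul hble h1 (hpos b).le (by positivity)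
      _ = C * Real.exp (-k * b) := by
          rw [hC, show Real.exp (k*b) * (2 / (-m)) * (A * Real.exp (m*b))
              = A * (2 / (-m)) * (Real.exp (k*b) * Real.exp (m*b)) from by ring,
            ← Real.exp_add, show k * b + m * b = -k * b from by rw [hk]; ring]
  have hcont2 : Continuous fun x : ℝ => |x| * f x := continuous_abs.mul hcont
  have hIoi : IntegrableOn (fun x : ℝ => |x| * f x) (Set.Ioi b1) := by
    apply Integrable.mono' ((exp_neg_integrableOn_Ioi b1 hkpos).const_mul C)
    · exact hcont2.aestronglyMeasurable
    · rw [ae_restrict_iff' measurableSet_Ioi]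
      exact ae_of_all _ fun b hb => by
        rw [Real.norm_eq_abs, abs_of_nonneg (mul_nonneg (abs_nonneg b) (hpos b).le)]
        exact hbound b hb
  have hIcc : IntegrableOn (fun x : ℝ => |x| * f x) (Set.Icc 0 b1) :=
    hcont2.integrableOn_Icc
  rw [show Set.Ici (0:ℝ) = Set.Icc 0 b1 ∪ Set.Ioi b1 from (Set.Icc_union_Ioi_eq_Ici hb1pos.le).symm]
  exact hIcc.union hIoi




lemma abs_int {f : ℝ → ℝ} (hpos : ∀ x, 0 < f x) (hint : Integrable f)
    (hcont : Continuous f) (hconc : ConcaveOn ℝ Set.univ (fun x => Real.log (f x))) :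
    Integrable (fun x => |x| * f x) := by
  have hR := tail_right hpos hint hcont hconc
  have hposn : ∀ x : ℝ, 0 < f (-x) := fun x => hpos _
  have hintn : Integrable (fun x : ℝ => f (-x)) := by
    simpa [Function.comp] using hint.comp_neg
  have hcontn : Continuous fun x : ℝ => f (-x) := hcont.comp continuous_neg
  have hconcn : ConcaveOn ℝ Set.univ (fun x => Real.log (f (-x))) := by
    refine ⟨convex_univ, ?_⟩
    intro x _ y _ a b ha hb hab
    have h := hconc.2 (Set.mem_univ (-x)) (Set.mem_univ (-y)) ha hb hab
    have hpt : a • (-x) + b • (-y) = -(a • x + b • y) := by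
      simp only [smul_eq_mul]; ring
    rw [hpt] at h
    simpa using h
  have hL0 := tail_right hposn hintn hcontn hconcn
  have hmp : MeasurePreserving (fun x : ℝ => -x) volume volume :=
    Measure.measurePreserving_neg _
  have hemb : MeasurableEmbedding (fun x : ℝ => -x) :=
    (Homeomorph.neg ℝ).measurableEmbedding
  have hL : IntegrableOn (fun x : ℝ => |x| * f x) (Set.Iic (0:ℝ)) := by
    rw [← hmp.integrableOn_comp_preimage hemb (f := fun x : ℝ => |x| * f x)
      (s := Set.Iic (0:ℝ))]
    have hpre : (fun x : ℝ => -x) ⁻¹' Set.Iic (0:ℝ) = Set.Ici (0:ℝ) := by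
      ext z; simp
    rw [hpre]
    have : ((fun x : ℝ => |x| * f x) ∘ fun x : ℝ => -x) = fun x : ℝ => |x| * f (-x) := by
      funext z; simp [Function.comp, abs_neg]
    rw [this]
    exact hL0
  have := hL.union hR
  rwa [Set.Iic_union_Ici, integrableOn_univ] at this



lemma concave_pair {c : ℝ → ℝ} (hc : StrictConcaveOn ℝ Set.univ c) {p q p' q' : ℝ}
    (h1 : p' < p) (h2 : p < q') (hsum : p + q = p' + q') :
    c p' + c q' < c p + c q := by
  have hne : p' ≠ q' := ne_of_lt (h1.trans h2)
  set lam : ℝ := (q' - p) / (q' - p') with hlam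
  have hd : 0 < q' - p' := by linarith
  have hlam0 : 0 < lam := div_pos (by linarith) hd
  have hlam1 : 0 < 1 - lam := by
    rw [hlam]
    have : (q' - p) / (q' - p') < 1 := (div_lt_one hd).mpr (by linarith)
    linarith
  have hcp := hc.2 (Set.mem_univ p') (Set.mem_univ q') hne hlam0 hlam1 (by ring)
  have hcq := hc.2 (Set.mem_univ p') (Set.mem_univ q') hne hlam1 hlam0 (by ring)
  have hp : lam • p' + (1 - lam) • q' = p := by
    simp only [smul_eq_mul, hlam]
    field_simp
    ring
  have hq : (1 - lam) • p' + lam • q' = q := by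
    simp only [smul_eq_mul, hlam]
    field_simp
    nlinarith [hsum]
  rw [hp] at hcp
  rw [hq] at hcq
  simp only [smul_eq_mul] at hcp hcq
  linarith

lemma prod_diff_eq {φ1 φ2 φ3 φ4 : ℝ → ℝ} (h1 : Integrable φ1) (h2 : Integrable φ2)
    (h3 : Integrable φ3) (h4 : Integrable φ4) :
    (∫ x, φ1 x) * (∫ x, φ2 x) - (∫ x, φ3 x) * (∫ x, φ4 x) =
      ∫ p : ℝ × ℝ, (φ1 p.1 * φ2 p.2 - φ3 p.1 * φ4 p.2) ∂(volume.prod volume) := by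
  rw [integral_sub (h1.mul_prod h2) (h3.mul_prod h4), integral_prod_mul, integral_prod_mul]

lemma double_pos {F : ℝ → ℝ → ℝ}
    (hint : Integrable (fun p : ℝ × ℝ => F p.1 p.2) (volume.prod volume))
    (hsum : ∀ b u, 0 ≤ F b u + F u b) (hstrict : ∀ b u, b ≠ u → 0 < F b u + F u b) :
    0 < ∫ p : ℝ × ℝ, F p.1 p.2 ∂(volume.prod volume) := by
  have hswap : Integrable (fun p : ℝ × ℝ => F p.2 p.1) (volume.prod volume) := hint.swap
  have h1 : ∫ p : ℝ × ℝ, F p.2 p.1 ∂(volume.prod volume)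
      = ∫ p : ℝ × ℝ, F p.1 p.2 ∂(volume.prod volume) :=
    integral_prod_swap (fun p : ℝ × ℝ => F p.1 p.2)
  have hG : Integrable (fun p : ℝ × ℝ => F p.1 p.2 + F p.2 p.1) (volume.prod volume) :=
    hint.add hswap
  have h2 : 0 < ∫ p : ℝ × ℝ, (F p.1 p.2 + F p.2 p.1) ∂(volume.prod volume) := by
    refine (integral_pos_iff_support_of_nonneg (fun p : ℝ × ℝ => hsum p.1 p.2) hG).mpr ?_
    have hbox : (Set.Ioo (0:ℝ) 1) ×ˢ (Set.Ioo (2:ℝ) 3) ⊆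
        Function.support fun p : ℝ × ℝ => F p.1 p.2 + F p.2 p.1 := by
      intro p hp
      have h12 : p.1 < 1 := hp.1.2
      have h22 : 2 < p.2 := hp.2.1
      exact (hstrict p.1 p.2 (ne_of_lt (by linarith))).ne'
    calc (0 : ℝ≥0∞) < 1 := by norm_num
      _ = (volume.prod volume) ((Set.Ioo (0:ℝ) 1) ×ˢ (Set.Ioo (2:ℝ) 3)) := by
          rw [Measure.prod_prod, Real.volume_Ioo, Real.volume_Ioo]
          norm_num
      _ ≤ _ := measure_mono hbox
  rw [integral_add hint hswap, h1] at h2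
  linarith

section Conv

variable {f2 f3 : ℝ → ℝ}

lemma conv_intY (h2 : NiceDensity f2) (h3 : NiceDensity f3) (X Y : ℝ) :
    Integrable (fun t => f2 (t - Y) * f3 (X - t)) := by
  obtain ⟨C3, hC3pos, hC3⟩ := nd_bdd h3
  have hint : Integrable (fun t => f2 (t - Y)) := (nd_int h2).comp_sub_right Y
  have : Integrable (fun t => f3 (X - t) * f2 (t - Y)) := by
    apply Integrable.bdd_mul (c := C3) hint
    · exact ((nd_cont h3).comp (continuous_const.sub continuous_id)).aestronglyMeasurable
    · exact ae_of_all _ fun t => by rw [Real.norm_eq_abs, abs_of_pos (h3.1 _)]; exact hC3 _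
  have heq : (fun t => f2 (t - Y) * f3 (X - t)) = fun t => f3 (X - t) * f2 (t - Y) := by
    funext t; ring
  rw [heq]; exact this

lemma conv_int0 (h2 : NiceDensity f2) (h3 : NiceDensity f3) (x : ℝ) :
    Integrable (fun t => f2 t * f3 (x - t)) := by
  have := conv_intY h2 h3 x 0
  simpa using this

lemma conv_pos (h2 : NiceDensity f2) (h3 : NiceDensity f3) (x : ℝ) :
    0 < conv f2 f3 x := by
  rw [conv]
  refine (integral_pos_iff_support_of_nonneg
    (fun t => (mul_pos (h2.1 t) (h3.1 (x - t))).le) (conv_int0 h2 h3 x)).mpr ?_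
  have hs : Function.support (fun t => f2 t * f3 (x - t)) = Set.univ :=
    Set.eq_univ_of_forall fun t => (mul_pos (h2.1 t) (h3.1 (x - t))).ne'
  rw [hs]
  simp [Real.volume_univ]

lemma conv_le (h2 : NiceDensity f2) (h3 : NiceDensity f3) {C3 : ℝ}
    (hC3 : ∀ y, f3 y ≤ C3) (x : ℝ) : conv f2 f3 x ≤ C3 := by
  rw [conv]
  have h1 : ∫ t, f2 t * f3 (x - t) ≤ ∫ t, f2 t * C3 := by
    apply integral_mono (conv_int0 h2 h3 x) ((nd_int h2).mul_const C3)
    intro t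
    exact mul_le_mul_of_nonneg_left (hC3 _) (h2.1 t).le
  have h2' : ∫ t, f2 t * C3 = C3 := by
    rw [integral_mul_const, h2.2.1, one_mul]
  linarith

/-- derivative of the convolution -/
noncomputable def dconv (f2 f3 : ℝ → ℝ) (x : ℝ) : ℝ := ∫ t, f2 t * deriv f3 (x - t)

lemma conv_hasDeriv (h2 : NiceDensity f2) (h3 : NiceDensity f3) (x : ℝ) :
    Integrable (fun t => f2 t * deriv f3 (x - t)) ∧
      HasDerivAt (conv f2 f3) (dconv f2 f3 x) x := by
  obtain ⟨M3, hM3pos, hM3, _⟩ := nd_lip h3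
  have h := hasDerivAt_integral_of_dominated_loc_of_deriv_le (Metric.ball_mem_nhds _ one_pos)
    (F := fun x' t => f2 t * f3 (x' - t)) (F' := fun x' t => f2 t * deriv f3 (x' - t))
    (bound := fun t => f2 t * M3)
    (Filter.Eventually.of_forall fun x' =>
      ((nd_cont h2).mul ((nd_cont h3).comp (continuous_const.sub continuous_id))).aestronglyMeasurable)
    (conv_int0 h2 h3 x)
    (((nd_cont h2).mul ((nd_dcont h3).comp (continuous_const.sub continuous_id))).aestronglyMeasurable)
    (ae_of_all _ fun t x' _ => by
      rw [Real.norm_eq_abs, abs_mul, abs_of_pos (h2.1 t)]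
      exact mul_le_mul_of_nonneg_left (hM3 _) (h2.1 t).le)
    ((nd_int h2).mul_const M3)
    (ae_of_all _ fun t x' _ => by
      have hsub : HasDerivAt (fun y : ℝ => y - t) 1 x' := (hasDerivAt_id x').sub_const t
      have hcomp := ((nd_diff h3) (x' - t)).hasDerivAt.comp x' hsub
      simpa [mul_one] using hcomp.const_mul (f2 t))
  exact ⟨h.1, h.2⟩

lemma dconv_abs_le (h2 : NiceDensity f2) (h3 : NiceDensity f3) {M3 : ℝ}
    (hM3 : ∀ y, |deriv f3 y| ≤ M3) (x : ℝ) : |dconv f2 f3 x| ≤ M3 := by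
  rw [dconv]
  calc |∫ t, f2 t * deriv f3 (x - t)| ≤ ∫ t, |f2 t * deriv f3 (x - t)| := by
        simpa [Real.norm_eq_abs, abs_mul] using
          norm_integral_le_integral_norm (μ := volume) (fun t => f2 t * deriv f3 (x - t))
    _ ≤ ∫ t, f2 t * M3 := by
        apply integral_mono ((conv_hasDeriv h2 h3 x).1.abs) ((nd_int h2).mul_const M3)
        intro t
        show |f2 t * deriv f3 (x - t)| ≤ f2 t * M3
        rw [abs_mul, abs_of_pos (h2.1 t)]
        exact mul_le_mul_of_nonneg_left (hM3 _) (h2.1 t).le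
    _ = M3 := by rw [integral_mul_const, h2.2.1, one_mul]

lemma conv_cont (h2 : NiceDensity f2) (h3 : NiceDensity f3) : Continuous (conv f2 f3) :=
  continuous_iff_continuousAt.mpr fun x => ((conv_hasDeriv h2 h3 x).2).continuousAt

lemma dconv_cont (h2 : NiceDensity f2) (h3 : NiceDensity f3) : Continuous (dconv f2 f3) := by
  obtain ⟨M3, hM3pos, hM3, _⟩ := nd_lip h3
  apply continuous_of_dominated
    (F := fun x t => f2 t * deriv f3 (x - t)) (bound := fun t => f2 t * M3)
  · exact fun x =>
      ((nd_cont h2).mul ((nd_dcont h3).comp (continuous_const.sub continuous_id))).aestronglyMeasurable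
  · intro x
    exact ae_of_all _ fun t => by
      rw [Real.norm_eq_abs, abs_mul, abs_of_pos (h2.1 t)]
      exact mul_le_mul_of_nonneg_left (hM3 _) (h2.1 t).le
  · exact (nd_int h2).mul_const M3
  · exact ae_of_all _ fun t =>
      continuous_const.mul ((nd_dcont h3).comp (continuous_id.sub continuous_const))

end Conv

section Conv2

variable {f2 f3 : ℝ → ℝ}

lemma conv_rep (X Y : ℝ) : conv f2 f3 (X - Y) = ∫ t, f2 (t - Y) * f3 (X - t) := by
  have h : (fun t => f2 (t - Y) * f3 (X - t))
      = fun t => (fun u => f2 u * f3 (X - Y - u)) (t - Y) := by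
    funext t
    simp only []
    congr 2
    ring
  rw [h, integral_sub_right_eq_self (fun u => f2 u * f3 (X - Y - u)) Y]
  rfl

lemma mul_lt_mul_of_log {a b c d : ℝ} (ha : 0 < a) (hb : 0 < b) (hc : 0 < c) (hd : 0 < d)
    (h : Real.log a + Real.log b < Real.log c + Real.log d) : a * b < c * d := by
  have h1 := Real.exp_lt_exp.mpr h
  rwa [Real.exp_add, Real.exp_add, Real.exp_log ha, Real.exp_log hb, Real.exp_log hc,
    Real.exp_log hd] at h1

lemma conv_tp2 (h2 : NiceDensity f2) (h3 : NiceDensity f3) {x y h : ℝ}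
    (hxy : x < y) (hh : 0 < h) :
    conv f2 f3 x * conv f2 f3 (y + h) < conv f2 f3 (x + h) * conv f2 f3 y := by
  have hc2 := h2.2.2.2.2
  have hc3 := h3.2.2.2.2
  set φ1 : ℝ → ℝ := fun t => f2 (t + h) * f3 (x - t) with hφ1
  set φ2 : ℝ → ℝ := fun u => f2 u * f3 (y - u) with hφ2
  set φ3 : ℝ → ℝ := fun t => f2 t * f3 (x - t) with hφ3
  set φ4 : ℝ → ℝ := fun u => f2 (u + h) * f3 (y - u) with hφ4
  have hi1 : Integrable φ1 := by
    have := conv_intY h2 h3 x (-h)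
    simpa [sub_neg_eq_add] using this
  have hi2 : Integrable φ2 := conv_int0 h2 h3 y
  have hi3 : Integrable φ3 := conv_int0 h2 h3 x
  have hi4 : Integrable φ4 := by
    have := conv_intY h2 h3 y (-h)
    simpa [sub_neg_eq_add] using this
  have e1 : conv f2 f3 (x + h) = ∫ t, φ1 t := by
    have := conv_rep (f2 := f2) (f3 := f3) x (-h)
    simp only [sub_neg_eq_add] at this
    exact this
  have e4 : conv f2 f3 (y + h) = ∫ u, φ4 u := by
    have := conv_rep (f2 := f2) (f3 := f3) y (-h)
    simp only [sub_neg_eq_add] at this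
    exact this
  have e2 : conv f2 f3 y = ∫ u, φ2 u := rfl
  have e3 : conv f2 f3 x = ∫ t, φ3 t := rfl
  rw [e1, e2, e3, e4, ← sub_pos]
  rw [prod_diff_eq hi1 hi2 hi3 hi4]
  have hfact : ∀ b u : ℝ, (φ1 b * φ2 u - φ3 b * φ4 u) + (φ1 u * φ2 b - φ3 u * φ4 b)
      = (f3 (x - b) * f3 (y - u) - f3 (x - u) * f3 (y - b))
        * (f2 (b + h) * f2 u - f2 b * f2 (u + h)) := by
    intro b u
    simp only [hφ1, hφ2, hφ3, hφ4]
    ring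
  have hD3 : ∀ b u : ℝ, b < u → 0 < f3 (x - b) * f3 (y - u) - f3 (x - u) * f3 (y - b) := by
    intro b u hbu
    rw [sub_pos]
    apply mul_lt_mul_of_log (h3.1 _) (h3.1 _) (h3.1 _) (h3.1 _)
    exact concave_pair hc3 (by linarith : x - u < x - b) (by linarith : x - b < y - b)
      (by ring)
  have hD2 : ∀ b u : ℝ, b < u → 0 < f2 (b + h) * f2 u - f2 b * f2 (u + h) := by
    intro b u hbu
    rw [sub_pos]
    apply mul_lt_mul_of_log (h2.1 _) (h2.1 _) (h2.1 _) (h2.1 _)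
    exact concave_pair hc2 (by linarith : b < b + h) (by linarith : b + h < u + h)
      (by ring)
  apply double_pos (F := fun b u => φ1 b * φ2 u - φ3 b * φ4 u)
  · exact (hi1.mul_prod hi2).sub (hi3.mul_prod hi4)
  · intro b u
    rw [hfact b u]
    rcases lt_trichotomy b u with hbu | rfl | hbu
    · exact (mul_pos (hD3 b u hbu) (hD2 b u hbu)).le
    · simp
    · have h1 := hD3 u b hbu
      have h2' := hD2 u b hbu
      nlinarith
  · intro b u hne
    rw [hfact b u]
    rcases lt_trichotomy b u with hbu | rfl | hbu
    · exact mul_pos (hD3 b u hbu) (hD2 b u hbu)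
    · exact absurd rfl hne
    · have h1 := hD3 u b hbu
      have h2' := hD2 u b hbu
      nlinarith

lemma conv_cross (h2 : NiceDensity f2) (h3 : NiceDensity f3) {p q : ℝ} (hpq : p < q) :
    dconv f2 f3 q * conv f2 f3 p < dconv f2 f3 p * conv f2 f3 q := by
  set c : ℝ → ℝ := fun z => Real.log (conv f2 f3 z) with hcdef
  set r : ℝ → ℝ := fun z => dconv f2 f3 z / conv f2 f3 z with hrdef
  have hc : ∀ z, HasDerivAt c (r z) z := fun z =>
    ((conv_hasDeriv h2 h3 z).2).log (conv_pos h2 h3 z).ne'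
  have hccont : Continuous c :=
    (conv_cont h2 h3).log fun z => (conv_pos h2 h3 z).ne'
  have hlogs : ∀ a b : ℝ, a < b → ∀ h : ℝ, 0 < h → c a + c (b + h) < c (a + h) + c b := by
    intro a b hab h hh
    have hk := conv_tp2 h2 h3 hab hh
    have hl := Real.log_lt_log (mul_pos (conv_pos h2 h3 a) (conv_pos h2 h3 (b + h))) hk
    rwa [Real.log_mul (conv_pos h2 h3 a).ne' (conv_pos h2 h3 (b + h)).ne',
      Real.log_mul (conv_pos h2 h3 (a + h)).ne' (conv_pos h2 h3 b).ne'] at hl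
  have hslope : ∀ z : ℝ, Tendsto (fun h => (c (z + h) - c z) / h) (𝓝[>] (0:ℝ)) (𝓝 (r z)) := by
    intro z
    have h1 := hasDerivAt_iff_tendsto_slope.1 (hc z)
    have he : Tendsto (fun h : ℝ => z + h) (𝓝[>] (0:ℝ)) (𝓝[≠] z) := by
      apply tendsto_nhdsWithin_of_tendsto_nhds_of_eventually_within
      · have : Tendsto (fun h : ℝ => z + h) (𝓝 (0:ℝ)) (𝓝 z) := by
          have := (continuous_add_left z).tendsto (0:ℝ); rwa [add_zero] at this
        exact this.mono_left nhdsWithin_le_nhds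
      · refine eventually_nhdsWithin_of_forall fun h hh => ?_
        have hh' : (0:ℝ) < h := hh
        simp only [Set.mem_compl_iff, Set.mem_singleton_iff]
        intro hcon
        have hz : h = 0 := by linarith [hcon]
        exact absurd hz (ne_of_gt hh')
    have h2' := h1.comp he
    refine Tendsto.congr ?_ h2'
    intro h
    simp only [Function.comp_apply, slope_def_field]
    rw [add_sub_cancel_left]
  have hweak : ∀ a b : ℝ, a < b → r b ≤ r a := by
    intro a b hab
    refine le_of_tendsto_of_tendsto (hslope b) (hslope a) ?_
    filter_upwards [self_mem_nhdsWithin] with h hh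
    have hh' : (0:ℝ) < h := hh
    have := hlogs a b hab h hh'
    have hnum : c (b + h) - c b ≤ c (a + h) - c a := by linarith
    exact (div_le_div_iff_of_pos_right hh').mpr hnum
  set m : ℝ := (p + q) / 2 with hm
  have hpm : p < m := by rw [hm]; linarith
  have hmq : m < q := by rw [hm]; linarith
  obtain ⟨ξ1, hξ1mem, hξ1⟩ := exists_hasDerivAt_eq_slope c r hpm
    hccont.continuousOn (fun z _ => hc z)
  obtain ⟨ξ2, hξ2mem, hξ2⟩ := exists_hasDerivAt_eq_slope c r hmq
    hccont.continuousOn (fun z _ => hc z)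
  have hmid : c p + c q < c m + c m := by
    have hk := hlogs p m hpm (m - p) (by linarith)
    have e1 : m + (m - p) = q := by rw [hm]; ring
    have e2 : p + (m - p) = m := by ring
    rw [e1, e2] at hk
    linarith
  have hden : q - m = m - p := by rw [hm]; ring
  have hslopes : (c q - c m) / (q - m) < (c m - c p) / (m - p) := by
    rw [hden]
    exact (div_lt_div_iff_of_pos_right (by linarith : (0:ℝ) < m - p)).mpr (by linarith)
  have hchain : r q < r p := by
    have h1 : r q ≤ r ξ2 := hweak ξ2 q hξ2mem.2
    have h2' : r ξ1 ≤ r p := hweak p ξ1 hξ1mem.1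
    rw [hξ1] at h2'
    rw [hξ2] at h1
    linarith
  rw [hrdef] at hchain
  exact (div_lt_div_iff₀ (conv_pos h2 h3 q) (conv_pos h2 h3 p)).1 hchain

end Conv2

section Main

lemma main_pos (f1 f2 f3 : ℝ → ℝ) (h1 : NiceDensity f1) (h2 : NiceDensity f2)
    (h3 : NiceDensity f3) {N : ℕ} (a : Fin N → ℝ) (i : Fin N) (s : Fin N → ℝ) :
    0 < deriv (fun x =>
      (∫ b, b * (f1 b * ∏ j, conv f2 f3 (Function.update s i x j - a j - b))) /
      (∫ b, f1 b * ∏ j, conv f2 f3 (Function.update s i x j - a j - b))) (s i) := by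
  obtain ⟨Cg, hCgpos, hCg⟩ := nd_bdd h3
  obtain ⟨M3, hM3pos, hM3, _⟩ := nd_lip h3
  have hgle : ∀ z, conv f2 f3 z ≤ Cg := conv_le h2 h3 hCg
  have hgpos : ∀ z, 0 < conv f2 f3 z := conv_pos h2 h3
  have hdgle : ∀ z, |dconv f2 f3 z| ≤ M3 := dconv_abs_le h2 h3 hM3
  set q : ℝ → ℝ := fun b => f1 b * ∏ j ∈ Finset.univ.erase i, conv f2 f3 (s j - a j - b)
    with hq
  have hprod : ∀ x b : ℝ, f1 b * ∏ j, conv f2 f3 (Function.update s i x j - a j - b)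
      = q b * conv f2 f3 (x - a i - b) := by
    intro x b
    rw [← Finset.mul_prod_erase Finset.univ
      (fun j => conv f2 f3 (Function.update s i x j - a j - b)) (Finset.mem_univ i)]
    rw [Function.update_self]
    rw [Finset.prod_congr rfl (fun j hj => by
      rw [Function.update_of_ne (Finset.ne_of_mem_erase hj)])]
    ring
  have hqpos : ∀ b, 0 < q b := fun b =>
    mul_pos (h1.1 b) (Finset.prod_pos fun j _ => hgpos _)
  have hqcont : Continuous q := by
    apply (nd_cont h1).mul
    apply continuous_finset_prod
    intro j _
    exact (conv_cont h2 h3).comp (continuous_const.sub continuous_id)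
  set K : ℝ := Cg ^ (Finset.univ.erase i).card with hK
  have hKpos : 0 < K := pow_pos hCgpos _
  have hqle : ∀ b, q b ≤ f1 b * K := by
    intro b
    rw [hq, hK]
    apply mul_le_mul_of_nonneg_left _ (h1.1 b).le
    calc (∏ j ∈ Finset.univ.erase i, conv f2 f3 (s j - a j - b))
        ≤ ∏ _j ∈ Finset.univ.erase i, Cg :=
          Finset.prod_le_prod (fun j _ => (hgpos _).le) (fun j _ => hgle _)
      _ = Cg ^ (Finset.univ.erase i).card := Finset.prod_const Cg
  have habs : Integrable (fun b => |b| * f1 b) :=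
    abs_int h1.1 (nd_int h1) (nd_cont h1) h1.2.2.2.2.concaveOn
  set x₀ : ℝ := s i with hx0
  -- continuity helpers
  have hFcont : ∀ x : ℝ, Continuous fun b => q b * conv f2 f3 (x - a i - b) := fun x =>
    hqcont.mul ((conv_cont h2 h3).comp (continuous_const.sub continuous_id))
  have hF'cont : ∀ x : ℝ, Continuous fun b => q b * dconv f2 f3 (x - a i - b) := fun x =>
    hqcont.mul ((dconv_cont h2 h3).comp (continuous_const.sub continuous_id))
  have hFint : ∀ x : ℝ, Integrable fun b => q b * conv f2 f3 (x - a i - b) := by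
    intro x
    apply Integrable.mono' (((nd_int h1).mul_const K).mul_const Cg)
      (hFcont x).aestronglyMeasurable
    refine ae_of_all _ fun b => ?_
    rw [Real.norm_eq_abs, abs_of_pos (mul_pos (hqpos b) (hgpos _))]
    exact mul_le_mul (hqle b) (hgle _) (hgpos _).le
      (mul_nonneg (h1.1 b).le hKpos.le)
  have hFbint : ∀ x : ℝ, Integrable fun b => b * (q b * conv f2 f3 (x - a i - b)) := by
    intro x
    apply Integrable.mono' ((habs.mul_const K).mul_const Cg)
      ((continuous_id.mul (hFcont x)).aestronglyMeasurable)
    refine ae_of_all _ fun b => ?_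
    rw [Real.norm_eq_abs, Pi.mul_apply, id_eq, abs_mul, abs_of_pos (mul_pos (hqpos b) (hgpos _))]
    calc |b| * (q b * conv f2 f3 (x - a i - b)) ≤ |b| * (f1 b * K * Cg) := by
          apply mul_le_mul_of_nonneg_left _ (abs_nonneg b)
          exact mul_le_mul (hqle b) (hgle _) (hgpos _).le
            (mul_nonneg (h1.1 b).le hKpos.le)
      _ = |b| * f1 b * K * Cg := by ring
  -- inner derivative
  have hinner : ∀ (b x' : ℝ), HasDerivAt (fun x => conv f2 f3 (x - a i - b))
      (dconv f2 f3 (x' - a i - b)) x' := by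
    intro b x'
    have hsub : HasDerivAt (fun x : ℝ => x - a i - b) 1 x' := by
      simpa using ((hasDerivAt_id x').sub_const (a i)).sub_const b
    have := ((conv_hasDeriv h2 h3 (x' - a i - b)).2).comp x' hsub
    simpa [mul_one, Function.comp_def] using this
  -- denominator derivative
  have hden := hasDerivAt_integral_of_dominated_loc_of_deriv_le (Metric.ball_mem_nhds _ one_pos)
    (F := fun x b => q b * conv f2 f3 (x - a i - b))
    (F' := fun x b => q b * dconv f2 f3 (x - a i - b))
    (bound := fun b => f1 b * K * M3)
    (Filter.Eventually.of_forall fun x => (hFcont x).aestronglyMeasurable)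
    (hFint x₀) ((hF'cont x₀).aestronglyMeasurable)
    (ae_of_all _ fun b x' _ => by
      rw [Real.norm_eq_abs, abs_mul, abs_of_pos (hqpos b)]
      calc q b * |dconv f2 f3 (x' - a i - b)| ≤ (f1 b * K) * M3 :=
            mul_le_mul (hqle b) (hdgle _) (abs_nonneg _)
              (mul_nonneg (h1.1 b).le hKpos.le)
        _ = f1 b * K * M3 := by ring)
    (((nd_int h1).mul_const K).mul_const M3)
    (ae_of_all _ fun b x' _ => (hinner b x').const_mul (q b))
  -- numerator derivative
  have hnum := hasDerivAt_integral_of_dominated_loc_of_deriv_le (Metric.ball_mem_nhds _ one_pos)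
    (F := fun x b => b * (q b * conv f2 f3 (x - a i - b)))
    (F' := fun x b => b * (q b * dconv f2 f3 (x - a i - b)))
    (bound := fun b => |b| * f1 b * K * M3)
    (Filter.Eventually.of_forall fun x =>
      (continuous_id.mul (hFcont x)).aestronglyMeasurable)
    (hFbint x₀) ((continuous_id.mul (hF'cont x₀)).aestronglyMeasurable)
    (ae_of_all _ fun b x' _ => by
      rw [Real.norm_eq_abs, abs_mul, abs_mul, abs_of_pos (hqpos b)]
      calc |b| * (q b * |dconv f2 f3 (x' - a i - b)|) ≤ |b| * ((f1 b * K) * M3) := by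
            apply mul_le_mul_of_nonneg_left _ (abs_nonneg b)
            exact mul_le_mul (hqle b) (hdgle _) (abs_nonneg _)
              (mul_nonneg (h1.1 b).le hKpos.le)
        _ = |b| * f1 b * K * M3 := by ring)
    (((habs.mul_const K).mul_const M3))
    (ae_of_all _ fun b x' _ => ((hinner b x').const_mul (q b)).const_mul b)
  obtain ⟨hden'int, hdenD⟩ := hden
  obtain ⟨hnum'int, hnumD⟩ := hnum
  -- positivity of denominator at x₀
  have hdenpos : 0 < ∫ b, q b * conv f2 f3 (x₀ - a i - b) := by
    refine (integral_pos_iff_support_of_nonneg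
      (fun b => (mul_pos (hqpos b) (hgpos _)).le) (hFint x₀)).mpr ?_
    have hs : Function.support (fun b => q b * conv f2 f3 (x₀ - a i - b)) = Set.univ :=
      Set.eq_univ_of_forall fun b => (mul_pos (hqpos b) (hgpos _)).ne'
    rw [hs]
    simp [Real.volume_univ]
  -- the quotient has derivative
  have hquot := hnumD.div hdenD hdenpos.ne'
  -- rewrite the target function
  have hfun : (fun x =>
      (∫ b, b * (f1 b * ∏ j, conv f2 f3 (Function.update s i x j - a j - b))) /
      (∫ b, f1 b * ∏ j, conv f2 f3 (Function.update s i x j - a j - b)))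
      = fun x => (∫ b, b * (q b * conv f2 f3 (x - a i - b))) /
          (∫ b, q b * conv f2 f3 (x - a i - b)) := by
    funext x
    congr 1
    · exact integral_congr_ae (ae_of_all _ fun b => by simp only [hprod x b])
    · exact integral_congr_ae (ae_of_all _ fun b => by simp only [hprod x b])
  rw [hfun, (show HasDerivAt (fun x => (∫ b, b * (q b * conv f2 f3 (x - a i - b))) / (∫ b, q b * conv f2 f3 (x - a i - b))) _ x₀ from hquot).deriv]
  -- positivity of the numerator of the quotient derivative
  have hcross : ∀ b u : ℝ, b < u →
      dconv f2 f3 (x₀ - a i - b) * conv f2 f3 (x₀ - a i - u)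
        - conv f2 f3 (x₀ - a i - b) * dconv f2 f3 (x₀ - a i - u) < 0 := by
    intro b u hbu
    have h := conv_cross h2 h3 (show x₀ - a i - u < x₀ - a i - b by linarith)
    linarith [h]
  have hkey : 0 < (∫ b, b * (q b * dconv f2 f3 (x₀ - a i - b)))
        * (∫ b, q b * conv f2 f3 (x₀ - a i - b))
      - (∫ b, b * (q b * conv f2 f3 (x₀ - a i - b)))
        * (∫ b, q b * dconv f2 f3 (x₀ - a i - b)) := by
    rw [prod_diff_eq hnum'int (hFint x₀) (hFbint x₀) hden'int]
    apply double_pos (F := fun b u => (b * (q b * dconv f2 f3 (x₀ - a i - b)))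
        * (q u * conv f2 f3 (x₀ - a i - u))
      - (b * (q b * conv f2 f3 (x₀ - a i - b))) * (q u * dconv f2 f3 (x₀ - a i - u)))
    · exact (hnum'int.mul_prod (hFint x₀)).sub ((hFbint x₀).mul_prod hden'int)
    · intro b u
      have hfact : (b * (q b * dconv f2 f3 (x₀ - a i - b)))
            * (q u * conv f2 f3 (x₀ - a i - u))
          - (b * (q b * conv f2 f3 (x₀ - a i - b))) * (q u * dconv f2 f3 (x₀ - a i - u))
          + ((u * (q u * dconv f2 f3 (x₀ - a i - u)))
            * (q b * conv f2 f3 (x₀ - a i - b))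
          - (u * (q u * conv f2 f3 (x₀ - a i - u))) * (q b * dconv f2 f3 (x₀ - a i - b)))
          = (b - u) * ((q b * q u) * (dconv f2 f3 (x₀ - a i - b) * conv f2 f3 (x₀ - a i - u)
            - conv f2 f3 (x₀ - a i - b) * dconv f2 f3 (x₀ - a i - u))) := by ring
      rw [hfact]
      rcases lt_trichotomy b u with hbu | rfl | hbu
      · have := hcross b u hbu
        nlinarith [mul_pos (sub_pos.mpr hbu)
          (mul_pos (mul_pos (hqpos b) (hqpos u)) (neg_pos.mpr this))]
      · simp
      · have := hcross u b hbu
        nlinarith [mul_pos (sub_pos.mpr hbu)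
          (mul_pos (mul_pos (hqpos b) (hqpos u)) (neg_pos.mpr this))]
    · intro b u hne
      have hfact : (b * (q b * dconv f2 f3 (x₀ - a i - b)))
            * (q u * conv f2 f3 (x₀ - a i - u))
          - (b * (q b * conv f2 f3 (x₀ - a i - b))) * (q u * dconv f2 f3 (x₀ - a i - u))
          + ((u * (q u * dconv f2 f3 (x₀ - a i - u)))
            * (q b * conv f2 f3 (x₀ - a i - b))
          - (u * (q u * conv f2 f3 (x₀ - a i - u))) * (q b * dconv f2 f3 (x₀ - a i - b)))
          = (b - u) * ((q b * q u) * (dconv f2 f3 (x₀ - a i - b) * conv f2 f3 (x₀ - a i - u)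
            - conv f2 f3 (x₀ - a i - b) * dconv f2 f3 (x₀ - a i - u))) := by ring
      rw [hfact]
      rcases lt_trichotomy b u with hbu | rfl | hbu
      · have := hcross b u hbu
        nlinarith [mul_pos (sub_pos.mpr hbu)
          (mul_pos (mul_pos (hqpos b) (hqpos u)) (neg_pos.mpr this))]
      · exact absurd rfl hne
      · have := hcross u b hbu
        nlinarith [mul_pos (sub_pos.mpr hbu)
          (mul_pos (mul_pos (hqpos b) (hqpos u)) (neg_pos.mpr this))]
  exact div_pos hkey (pow_pos hdenpos 2)

end Main

end CCMI

/-- Paper's lemma: the posterior expectation of the common component of outcomes is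
strictly increasing in every agent's outcome.  In the quality linkage model, whenever
`∂/∂sᵢ E[θ̄ | S = s]` exists it is strictly positive; in the circumstance linkage model,
whenever `∂/∂sᵢ E[ε̄ | S = s]` exists it is strictly positive. -/
theorem common_component_mean_increasing {N : ℕ} (hN : 0 < N)
    (fθb fθp fε fθ fεb fεp : ℝ → ℝ)
    (hθb : NiceDensity fθb) (hθp : NiceDensity fθp) (hε : NiceDensity fε)
    (hθ : NiceDensity fθ) (hεb : NiceDensity fεb) (hεp : NiceDensity fεp)
    (a : Fin N → ℝ) :
    ((∀ (i : Fin N) (s : Fin N → ℝ),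
        DifferentiableAt ℝ (fun x => qBarMean fθb fθp fε a (Function.update s i x)) (s i)) →
      ∀ (i : Fin N) (s : Fin N → ℝ),
        0 < deriv (fun x => qBarMean fθb fθp fε a (Function.update s i x)) (s i)) ∧
    ((∀ (i : Fin N) (s : Fin N → ℝ),
        DifferentiableAt ℝ (fun x => cBarMean fθ fεb fεp a (Function.update s i x)) (s i)) →
      ∀ (i : Fin N) (s : Fin N → ℝ),
        0 < deriv (fun x => cBarMean fθ fεb fεp a (Function.update s i x)) (s i)) := by
  constructor
  · intro _ i s
    have h := CCMI.main_pos fθb fθp fε hθb hθp hε a i s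
    simpa [qBarMean] using h
  · intro _ i s
    have h := CCMI.main_pos fεb fθ fεp hεb hθ hεp a i s
    simpa [cBarMean] using h
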